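/- Let G be a group, let g ≥ 1, and let x_1, x_2, …, x_{2g} be elements of G satisfying the braid relations x_i x_{i+1} x_i = x_{i+1} x_i x_{i+1} for all 1 ≤ i ≤ 2g−1, and x_i x_j = x_j x_i whenever |i − j| ≥ 2. Then (x_1 x_2 ⋯ x_{2g})^{2g+1} = (x_1 x_2 ⋯ x_{2g−1})^{2g} · (x_{2g} x_{2g−1} ⋯ x_2 x_1) · (x_1 x_2 ⋯ x_{2g}). -/
import Mathlib

namespace ChainBraid

variable {G : Type*} [Group G]

/-- `Pp x m = x 1 * x 2 * ⋯ * x m`. -/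
def Pp (x : ℕ → G) : ℕ → G
  | 0 => 1
  | m+1 => Pp x m * x (m+1)

/-- `Ff x b l = x (b+l) * x (b+l-1) * ⋯ * x (b+1)` (l letters, decreasing). -/
def Ff (x : ℕ → G) (b : ℕ) : ℕ → G
  | 0 => 1
  | l+1 => x (b+l+1) * Ff x b l

lemma Pp_succ (x : ℕ → G) (m : ℕ) : Pp x (m+1) = Pp x m * x (m+1) := rfl

lemma Ff_succ (x : ℕ → G) (b l : ℕ) : Ff x b (l+1) = x (b+l+1) * Ff x b l := rfl

lemma Ff_tail (x : ℕ → G) (l : ℕ) : ∀ b, Ff x b (l+1) = Ff x (b+1) l * x (b+1) := by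
  induction l with
  | zero => intro b; simp [Ff]
  | succ l ih =>
      intro b
      rw [Ff_succ, ih b, Ff_succ]
      have : b + (l+1) + 1 = (b+1) + l + 1 := by omega
      rw [this, mul_assoc]

/-- commutation of a high letter with a prefix product -/
lemma CP (x : ℕ → G) (N : ℕ)
    (hcomm : ∀ i j, 1 ≤ i → j ≤ N + 2 → i + 2 ≤ j → x i * x j = x j * x i)
    (m : ℕ) : ∀ j, m + 2 ≤ j → j ≤ N + 2 → x j * Pp x m = Pp x m * x j := by
  induction m with
  | zero => intro j _ _; simp [Pp]
  | succ m ih =>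
      intro j hj1 hj2
      rw [Pp_succ, ← mul_assoc, ih j (by omega) hj2, mul_assoc,
        ← hcomm (m+1) j (by omega) hj2 (by omega), mul_assoc]

/-- commutation of a low letter with a decreasing product -/
lemma CF (x : ℕ → G) (N : ℕ)
    (hcomm : ∀ i j, 1 ≤ i → j ≤ N + 2 → i + 2 ≤ j → x i * x j = x j * x i)
    (l : ℕ) : ∀ b j, 1 ≤ j → j + 1 ≤ b → b + l ≤ N + 2 →
      x j * Ff x b l = Ff x b l * x j := by
  induction l with
  | zero => intro b j _ _ _; simp [Ff]
  | succ l ih =>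
      intro b j h1 h2 h3
      rw [Ff_succ, ← mul_assoc, hcomm j (b+l+1) h1 (by omega) (by omega),
        mul_assoc, ih b j h1 h2 (by omega), mul_assoc]

/-- shift lemma: `(x 1 ⋯ x m) * x i = x (i+1) * (x 1 ⋯ x m)` for `i + 1 ≤ m`. -/
lemma shift (x : ℕ → G) (N : ℕ)
    (hbraid : ∀ i, 1 ≤ i → i + 1 ≤ N + 2 →
      x i * x (i + 1) * x i = x (i + 1) * x i * x (i + 1))
    (hcomm : ∀ i j, 1 ≤ i → j ≤ N + 2 → i + 2 ≤ j → x i * x j = x j * x i)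
    (m : ℕ) : ∀ i, 1 ≤ i → i + 1 ≤ m → m ≤ N + 2 →
      Pp x m * x i = x (i+1) * Pp x m := by
  induction m with
  | zero => intro i h1 h2 _; omega
  | succ m ih =>
      intro i h1 h2 hm
      rcases Nat.lt_or_ge (i+1) (m+1) with hlt | hge
      · -- i + 1 ≤ m, use IH and commutation of x i with x (m+1)
        rw [Pp_succ, mul_assoc, ← hcomm i (m+1) h1 (by omega) (by omega),
          ← mul_assoc, ih i h1 (by omega) (by omega), mul_assoc]
      · -- i + 1 = m + 1, i.e. i = m
        have hi : i = m := by omega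
        subst hi
        obtain ⟨i', rfl⟩ : ∃ i', i = i' + 1 := ⟨i - 1, by omega⟩
        have e1 : Pp x (i'+1+1) = Pp x i' * x (i'+1) * x (i'+2) := by
          rw [Pp_succ, Pp_succ]
        have key := hbraid (i'+1) (by omega) (by omega)
        have hcp := CP x N hcomm i' (i'+2) (by omega) (by omega)
        calc Pp x (i'+1+1) * x (i'+1)
            = Pp x i' * (x (i'+1) * x (i'+2) * x (i'+1)) := by
              rw [e1]; simp only [mul_assoc]
          _ = Pp x i' * (x (i'+2) * x (i'+1) * x (i'+2)) := by rw [key]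
          _ = x (i'+2) * Pp x i' * (x (i'+1) * x (i'+2)) := by
              simp only [← mul_assoc]; rw [hcp]
          _ = x (i'+1+1) * Pp x (i'+1+1) := by
              rw [e1]; simp only [mul_assoc]

/-- sliding a decreasing product past the full prefix shifts it down -/
lemma SF (x : ℕ → G) (N : ℕ)
    (hbraid : ∀ i, 1 ≤ i → i + 1 ≤ N + 2 →
      x i * x (i + 1) * x i = x (i + 1) * x i * x (i + 1))
    (hcomm : ∀ i j, 1 ≤ i → j ≤ N + 2 → i + 2 ≤ j → x i * x j = x j * x i)
    (l : ℕ) : ∀ b, b + l ≤ N →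
      Ff x (b+1) l * Pp x (N+1) = Pp x (N+1) * Ff x b l := by
  induction l with
  | zero => intro b _; simp [Ff]
  | succ l ih =>
      intro b h
      rw [Ff_succ, Ff_succ, mul_assoc, ih b (by omega), ← mul_assoc]
      have e : b + 1 + l + 1 = (b + l + 1) + 1 := by omega
      rw [e, ← shift x N hbraid hcomm (N+1) (b+l+1) (by omega) (by omega) (by omega),
        mul_assoc]

lemma XnP (x : ℕ → G) (N : ℕ)
    (hcomm : ∀ i j, 1 ≤ i → j ≤ N + 2 → i + 2 ≤ j → x i * x j = x j * x i) :
    x (N+2) * Pp x (N+1) =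
      Pp x (N+1) * ((x (N+1))⁻¹ * (x (N+2) * x (N+1))) := by
  have h := CP x N hcomm N (N+2) le_rfl le_rfl
  rw [Pp_succ, ← mul_assoc, h]
  group

/-- conjugation formula: `P^{-k} x_n P^k = (Ff b k)⁻¹ x_n (Ff b k)`. -/
lemma Cj (x : ℕ → G) (N : ℕ)
    (hbraid : ∀ i, 1 ≤ i → i + 1 ≤ N + 2 →
      x i * x (i + 1) * x i = x (i + 1) * x i * x (i + 1))
    (hcomm : ∀ i j, 1 ≤ i → j ≤ N + 2 → i + 2 ≤ j → x i * x j = x j * x i)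
    (k : ℕ) : ∀ b, k + b = N + 1 →
      x (N+2) * (Pp x (N+1)) ^ k =
        (Pp x (N+1)) ^ k * ((Ff x b k)⁻¹ * (x (N+2) * Ff x b k)) := by
  induction k with
  | zero => intro b _; simp [Ff]
  | succ k ih =>
      intro b hb
      have hih := ih (b+1) (by omega)
      have hsf := SF x N hbraid hcomm k b (by omega)
      have hxp := XnP x N hcomm
      have hAinv : (Ff x (b+1) k)⁻¹ * Pp x (N+1) = Pp x (N+1) * (Ff x b k)⁻¹ := by
        rw [inv_mul_eq_iff_eq_mul, ← mul_assoc, hsf, mul_inv_cancel_right]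
      have hFb : Ff x b (k+1) = x (N+1) * Ff x b k := by
        rw [Ff_succ]; congr 2; omega
      calc x (N+2) * Pp x (N+1) ^ (k+1)
          = (x (N+2) * Pp x (N+1) ^ k) * Pp x (N+1) := by
            rw [pow_succ, mul_assoc]
        _ = (Pp x (N+1) ^ k * ((Ff x (b+1) k)⁻¹ * (x (N+2) * Ff x (b+1) k))) *
              Pp x (N+1) := by rw [hih]
        _ = Pp x (N+1) ^ k *
              ((Ff x (b+1) k)⁻¹ * (x (N+2) * (Ff x (b+1) k * Pp x (N+1)))) := by
            simp only [mul_assoc]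
        _ = Pp x (N+1) ^ k *
              ((Ff x (b+1) k)⁻¹ * ((x (N+2) * Pp x (N+1)) * Ff x b k)) := by
            rw [hsf]; simp only [mul_assoc]
        _ = Pp x (N+1) ^ k *
              (((Ff x (b+1) k)⁻¹ * Pp x (N+1)) *
                (((x (N+1))⁻¹ * (x (N+2) * x (N+1))) * Ff x b k)) := by
            rw [hxp]; simp only [mul_assoc]
        _ = Pp x (N+1) ^ k *
              ((Pp x (N+1) * (Ff x b k)⁻¹) *
                (((x (N+1))⁻¹ * (x (N+2) * x (N+1))) * Ff x b k)) := by
            rw [hAinv]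
        _ = Pp x (N+1) ^ (k+1) * ((Ff x b (k+1))⁻¹ * (x (N+2) * Ff x b (k+1))) := by
            rw [hFb, pow_succ]
            simp only [mul_inv_rev, mul_assoc]

/-- comb identity: `x_{b+l+1} · (x_{b+l}⋯x_{b+1}) · (x_{b+l+1}⋯x_{b+2})
      = (x_{b+l}⋯x_{b+1}) · (x_{b+l+1}⋯x_{b+1})`. -/
lemma comb (x : ℕ → G) (N : ℕ)
    (hbraid : ∀ i, 1 ≤ i → i + 1 ≤ N + 2 →
      x i * x (i + 1) * x i = x (i + 1) * x i * x (i + 1))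
    (hcomm : ∀ i j, 1 ≤ i → j ≤ N + 2 → i + 2 ≤ j → x i * x j = x j * x i)
    (l : ℕ) : ∀ b, 1 ≤ l → b + l + 1 ≤ N + 2 →
      x (b+l+1) * (Ff x b l * Ff x (b+1) l) = Ff x b l * Ff x b (l+1) := by
  induction l with
  | zero => intro b h _; omega
  | succ l ih =>
      intro b _ hbl
      rcases Nat.eq_zero_or_pos l with rfl | hl
      · -- base case l = 1
        have hb := hbraid (b+1) (by omega) (by omega)
        simp only [Ff, Nat.add_zero, mul_one]
        simp only [← mul_assoc]
        rw [← hb]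
      · -- inductive step, l ≥ 1
        have hT1 : Ff x b (l+1) = Ff x (b+1) l * x (b+1) := Ff_tail x l b
        have hT2 : Ff x (b+1) (l+1) = Ff x (b+2) l * x (b+2) := by
          have := Ff_tail x l (b+1)
          rwa [show b+1+1 = b+2 from by omega] at this
        have hT3 : Ff x b (l+1+1) = Ff x (b+1) (l+1) * x (b+1) := Ff_tail x (l+1) b
        have hCF : x (b+1) * Ff x (b+2) l = Ff x (b+2) l * x (b+1) :=
          CF x N hcomm l (b+2) (b+1) (by omega) (by omega) (by omega)
        have hIH : x (b+1+l+1) * (Ff x (b+1) l * Ff x (b+2) l)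
            = Ff x (b+1) l * Ff x (b+1) (l+1) := by
          have := ih (b+1) hl (by omega)
          rwa [show b+1+1 = b+2 from by omega] at this
        have hbr2 : x (b+1) * x (b+2) * x (b+1) = x (b+2) * x (b+1) * x (b+2) := by
          have := hbraid (b+1) (by omega) (by omega)
          rwa [show b+1+1 = b+2 from by omega] at this
        have etop : b + (l+1) + 1 = b+1+l+1 := by omega
        calc x (b+(l+1)+1) * (Ff x b (l+1) * Ff x (b+1) (l+1))
            = x (b+1+l+1) * (Ff x (b+1) l * ((x (b+1) * Ff x (b+2) l) * x (b+2))) := by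
              rw [etop, hT1, hT2]; simp only [mul_assoc]
          _ = (x (b+1+l+1) * (Ff x (b+1) l * Ff x (b+2) l)) * (x (b+1) * x (b+2)) := by
              rw [hCF]; simp only [mul_assoc]
          _ = (Ff x (b+1) l * Ff x (b+1) (l+1)) * (x (b+1) * x (b+2)) := by
              rw [hIH]
          _ = Ff x (b+1) l * (Ff x (b+2) l * (x (b+2) * x (b+1) * x (b+2))) := by
              rw [hT2]; simp only [mul_assoc]
          _ = Ff x (b+1) l * ((Ff x (b+2) l * x (b+1)) * (x (b+2) * x (b+1))) := by
              rw [← hbr2]; simp only [mul_assoc]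
          _ = Ff x (b+1) l * ((x (b+1) * Ff x (b+2) l) * (x (b+2) * x (b+1))) := by
              rw [← hCF]
          _ = Ff x b (l+1) * Ff x b (l+1+1) := by
              rw [hT1, hT3, hT2]; simp only [mul_assoc]

/-- main induction: `(P_{N+1} x_{N+2})^{k+1} = P_{N+1}^{k+1} · (x_{N+2} ⋯ x_{b+1})`. -/
lemma L4 (x : ℕ → G) (N : ℕ)
    (hbraid : ∀ i, 1 ≤ i → i + 1 ≤ N + 2 →
      x i * x (i + 1) * x i = x (i + 1) * x i * x (i + 1))
    (hcomm : ∀ i j, 1 ≤ i → j ≤ N + 2 → i + 2 ≤ j → x i * x j = x j * x i)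
    (k : ℕ) : ∀ b, k + b + 1 = N + 2 →
      (Pp x (N+1) * x (N+2)) ^ (k+1) = (Pp x (N+1)) ^ (k+1) * Ff x b (k+1) := by
  induction k with
  | zero =>
      intro b hb
      have : b = N + 1 := by omega
      subst this
      simp [Ff, show N+1+0+1 = N+2 from by omega]
  | succ k ih =>
      intro b hb
      have hih := ih (b+1) (by omega)
      have hcj := Cj x N hbraid hcomm (k+1) b (by omega)
      have hcb : x (b+(k+1)+1) * (Ff x b (k+1) * Ff x (b+1) (k+1))
          = Ff x b (k+1) * Ff x b (k+1+1) :=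
        comb x N hbraid hcomm (k+1) b (by omega) (by omega)
      rw [show b+(k+1)+1 = N+2 from by omega] at hcb
      calc (Pp x (N+1) * x (N+2)) ^ (k+1+1)
          = (Pp x (N+1) * x (N+2)) * (Pp x (N+1) * x (N+2)) ^ (k+1) := by
            rw [pow_succ']
        _ = Pp x (N+1) * ((x (N+2) * (Pp x (N+1)) ^ (k+1)) * Ff x (b+1) (k+1)) := by
            rw [hih]; simp only [mul_assoc]
        _ = Pp x (N+1) * ((Pp x (N+1)) ^ (k+1) *
              ((Ff x b (k+1))⁻¹ * (x (N+2) * (Ff x b (k+1) * Ff x (b+1) (k+1))))) := by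
            rw [hcj]; simp only [mul_assoc]
        _ = Pp x (N+1) * ((Pp x (N+1)) ^ (k+1) *
              ((Ff x b (k+1))⁻¹ * (Ff x b (k+1) * Ff x b (k+1+1)))) := by
            rw [hcb]
        _ = (Pp x (N+1)) ^ (k+1+1) * Ff x b (k+1+1) := by
            simp only [pow_succ', inv_mul_cancel_left, mul_assoc]

lemma Pp_eq_range (x : ℕ → G) (m : ℕ) :
    Pp x m = ((List.range m).map fun i => x (i + 1)).prod := by
  induction m with
  | zero => simp [Pp]
  | succ m ih => rw [List.range_succ]; simp [Pp, ih]

lemma Ff0_eq_range (x : ℕ → G) (m : ℕ) :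
    Ff x 0 m = ((List.range m).reverse.map fun i => x (i + 1)).prod := by
  induction m with
  | zero => simp [Ff]
  | succ m ih => rw [List.range_succ]; simp [Ff, ih]

end ChainBraid

/-- In any group `G`, if `x_1, …, x_{2g}` satisfy the braid relations
`x_i x_{i+1} x_i = x_{i+1} x_i x_{i+1}` for `1 ≤ i ≤ 2g - 1` and `x_i x_j = x_j x_i` for
`|i - j| ≥ 2`, then
`(x_1 ⋯ x_{2g})^{2g+1} = (x_1 ⋯ x_{2g-1})^{2g} · (x_{2g} x_{2g-1} ⋯ x_1) · (x_1 ⋯ x_{2g})`. -/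
theorem chain_braid_identity (G : Type*) [Group G] (g : ℕ) (hg : 1 ≤ g) (x : ℕ → G)
    (hbraid : ∀ i, 1 ≤ i → i ≤ 2 * g - 1 →
      x i * x (i + 1) * x i = x (i + 1) * x i * x (i + 1))
    (hcomm : ∀ i j, 1 ≤ i → i ≤ 2 * g → 1 ≤ j → j ≤ 2 * g → (i + 2 ≤ j ∨ j + 2 ≤ i) →
      x i * x j = x j * x i) :
    (((List.range (2 * g)).map fun i => x (i + 1)).prod) ^ (2 * g + 1) =
      (((List.range (2 * g - 1)).map fun i => x (i + 1)).prod) ^ (2 * g) *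
        (((List.range (2 * g)).reverse.map fun i => x (i + 1)).prod) *
        (((List.range (2 * g)).map fun i => x (i + 1)).prod) := by
  open ChainBraid in
  obtain ⟨N', rfl⟩ : ∃ N', g = N' + 1 := ⟨g - 1, by omega⟩
  set N := 2 * N' with hN
  have hn2 : 2 * (N' + 1) = N + 2 := by omega
  have hn1 : 2 * (N' + 1) - 1 = N + 1 := by omega
  have hbraid' : ∀ i, 1 ≤ i → i + 1 ≤ N + 2 →
      x i * x (i + 1) * x i = x (i + 1) * x i * x (i + 1) := by
    intro i h1 h2; exact hbraid i h1 (by omega)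
  have hcomm' : ∀ i j, 1 ≤ i → j ≤ N + 2 → i + 2 ≤ j → x i * x j = x j * x i := by
    intro i j h1 h2 h3
    exact hcomm i j h1 (by omega) (by omega) (by omega) (Or.inl h3)
  have key := L4 x N hbraid' hcomm' (N+1) 0 (by omega)
  rw [show N + 1 + 1 = N + 2 from rfl] at key
  have hPfull : Pp x (N+2) = Pp x (N+1) * x (N+2) := rfl
  rw [hn1, hn2, ← Pp_eq_range, ← Pp_eq_range, ← Ff0_eq_range, hPfull]
  rw [show N + 2 + 1 = (N+2) + 1 from rfl, pow_succ, key]
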